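/- Let d ≥ 1 and let ρ₀ be a measurable probability density on EuclideanSpace ℝ (Fin d) with respect to Lebesgue measure. Let 𝒜 denote the set of measurable probability densities ρ such that ρ(x) = 0 for almost every x with ρ₀(x) = 0 and such that ρ·log ρ and ρ·log ρ₀ are Lebesgue integrable. Suppose ρ̂ ∈ 𝒜 maximizes the functional ρ ↦ ∫ ρ·(−log ρ₀) − ∫ ρ log(ρ/ρ₀) over 𝒜. Then for every ρ ∈ 𝒜 one has −∫ ρ log ρ ≤ −∫ ρ̂ log ρ̂; that is, ρ̂ also maximizes the differential entropy over 𝒜, so that H(p*) − H(ρ̂) ≤ 0 where H(p*) = sup_{ρ ∈ 𝒜} H(ρ). -/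
import Mathlib


open MeasureTheory

/-- One-step convergence: a maximizer of the KL-regularized entropy first-variation
objective `ρ ↦ ∫ ρ (−log ρ₀) − KL(ρ, ρ₀)` over the admissible class `𝒜` of densities
supported in the support of `ρ₀` also maximizes the differential entropy over `𝒜`. -/
theorem one_step_convergence
    (d : ℕ) (hd : 1 ≤ d)
    (ρ₀ : EuclideanSpace ℝ (Fin d) → ℝ)
    (hρ₀meas : Measurable ρ₀) (hρ₀nn : ∀ x, 0 ≤ ρ₀ x) (hρ₀1 : (∫ x, ρ₀ x) = 1)
    (A : Set (EuclideanSpace ℝ (Fin d) → ℝ))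
    (hA : A = {ρ | Measurable ρ ∧ (∀ x, 0 ≤ ρ x) ∧ (∫ x, ρ x) = 1 ∧
      (∀ᵐ x ∂(volume : Measure (EuclideanSpace ℝ (Fin d))), ρ₀ x = 0 → ρ x = 0) ∧
      Integrable (fun x => ρ x * Real.log (ρ x)) ∧
      Integrable (fun x => ρ x * Real.log (ρ₀ x))})
    (ρhat : EuclideanSpace ℝ (Fin d) → ℝ) (hρhatA : ρhat ∈ A)
    (hmax : ∀ ρ ∈ A,
      (∫ x, ρ x * (-Real.log (ρ₀ x))) - (∫ x, ρ x * Real.log (ρ x / ρ₀ x)) ≤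
      (∫ x, ρhat x * (-Real.log (ρ₀ x))) - (∫ x, ρhat x * Real.log (ρhat x / ρ₀ x))) :
    ∀ ρ ∈ A, (-∫ x, ρ x * Real.log (ρ x)) ≤ -∫ x, ρhat x * Real.log (ρhat x) := by
  have key : ∀ ρ ∈ A,
      (∫ x, ρ x * (-Real.log (ρ₀ x))) - (∫ x, ρ x * Real.log (ρ x / ρ₀ x)) =
      -∫ x, ρ x * Real.log (ρ x) := by
    intro ρ hρ
    rw [hA] at hρ
    obtain ⟨hm, hnn, h1, hsupp, hint1, hint2⟩ := hρ
    have hae : (fun x => ρ x * Real.log (ρ x / ρ₀ x)) =ᵐ[volume]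
        (fun x => ρ x * Real.log (ρ x) - ρ x * Real.log (ρ₀ x)) := by
      filter_upwards [hsupp] with x hx
      by_cases h : ρ x = 0
      · simp [h]
      · have h0 : ρ₀ x ≠ 0 := fun h0 => h (hx h0)
        rw [Real.log_div h h0]; ring
    have hneg : (fun x => ρ x * (-Real.log (ρ₀ x))) =
        (fun x => -(ρ x * Real.log (ρ₀ x))) := by
      funext x; ring
    rw [integral_congr_ae hae, integral_sub hint1 hint2, hneg, integral_neg]
    ring
  intro ρ hρ
  have h1 := key ρ hρ
  have h2 := key ρhat hρhatA
  have := hmax ρ hρ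
  rw [h1, h2] at this
  exact this
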